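/- Let Λ be a field with valuations v_1, v_2 and let v = min(v_1,v_2) be their finest common coarsening (the valuation whose ring is the localization of O_{v_1} (equivalently O_{v_2}) at the largest prime ideal contained in both Spec(O_{v_1}) and Spec(O_{v_2})). If v < v_1 and v < v_2 strictly, then (1+m_{v_1})·(1+m_{v_2}) = O_v^× = O_{v_1}^×·O_{v_2}^×, and (1+m_{v_1}) − (1+m_{v_2}) = O_v = O_{v_1} − O_{v_2}. -/

import Mathlib

open scoped Pointwise

section Helpers

variable {K : Type*} [Field K]

lemma nu_mem {A : ValuationSubring K} {x : K} (h : x ∈ A.nonunits) : x ∈ A :=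
  A.nonunits_subset h

lemma nu_of_not_mem {A : ValuationSubring K} {x : K} (h : x ∉ A) : x⁻¹ ∈ A.nonunits := by
  rw [ValuationSubring.mem_nonunits_iff, Valuation.map_inv]
  rw [← A.valuation_le_one_iff] at h
  exact inv_lt_one_of_one_lt₀ (lt_of_not_ge h)

lemma nu_mul {A : ValuationSubring K} {x y : K} (hx : x ∈ A.nonunits) (hy : y ∈ A) :
    y * x ∈ A.nonunits := by
  rw [ValuationSubring.mem_nonunits_iff, map_mul]
  calc A.valuation y * A.valuation x ≤ 1 * A.valuation x :=
        mul_le_mul_of_nonneg_right ((A.valuation_le_one_iff y).2 hy) (by simp)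
    _ = A.valuation x := one_mul _
    _ < 1 := (ValuationSubring.mem_nonunits_iff A).1 hx

lemma nu_zero (A : ValuationSubring K) : (0 : K) ∈ A.nonunits := by
  rw [ValuationSubring.mem_nonunits_iff, map_zero]; exact zero_lt_one

lemma nu_add {A : ValuationSubring K} {x y : K} (hx : x ∈ A.nonunits) (hy : y ∈ A.nonunits) :
    x + y ∈ A.nonunits := by
  rw [ValuationSubring.mem_nonunits_iff] at *
  exact lt_of_le_of_lt (A.valuation.map_add x y) (max_lt hx hy)

lemma nu_neg {A : ValuationSubring K} {x : K} (hx : x ∈ A.nonunits) : -x ∈ A.nonunits := by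
  rwa [ValuationSubring.mem_nonunits_iff, Valuation.map_neg,
    ← ValuationSubring.mem_nonunits_iff]

lemma nu_ne_neg_one {A : ValuationSubring K} {x : K} (hx : x ∈ A.nonunits) :
    (1 : K) + x ≠ 0 := by
  intro h0
  have hv : A.valuation (1 + x) = 1 :=
    A.valuation.map_one_add_of_lt ((ValuationSubring.mem_nonunits_iff A).1 hx)
  rw [h0, map_zero] at hv
  exact zero_ne_one hv

lemma nu_one_add_mem {A : ValuationSubring K} {x : K} (hx : x ∈ A.nonunits) :
    (1 : K) + x ∈ A := by
  have hv : A.valuation (1 + x) = 1 :=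
    A.valuation.map_one_add_of_lt ((ValuationSubring.mem_nonunits_iff A).1 hx)
  exact A.mem_of_valuation_le_one _ hv.le

lemma nu_one_add_inv_mem {A : ValuationSubring K} {x : K} (hx : x ∈ A.nonunits) :
    ((1 : K) + x)⁻¹ ∈ A := by
  have hv : A.valuation (1 + x) = 1 :=
    A.valuation.map_one_add_of_lt ((ValuationSubring.mem_nonunits_iff A).1 hx)
  apply A.mem_of_valuation_le_one
  rw [Valuation.map_inv, hv, inv_one]


/-- The subring generated by two valuation subrings, as a valuation subring. -/
def joinV (O₁ O₂ : ValuationSubring K) : ValuationSubring K :=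
  { Subring.closure ((O₁ : Set K) ∪ (O₂ : Set K)) with
    mem_or_inv_mem' := fun x =>
      (O₁.mem_or_inv_mem x).imp
        (fun h => Subring.subset_closure (Or.inl h))
        (fun h => Subring.subset_closure (Or.inl h)) }

lemma mem_joinV {O₁ O₂ : ValuationSubring K} {x : K} :
    x ∈ joinV O₁ O₂ ↔ x ∈ Subring.closure ((O₁ : Set K) ∪ (O₂ : Set K)) := Iff.rfl

/-- Every nonzero element of the least common overring factors as a product of
an element of `O₁` and an element of `O₂`. -/
lemma prod_decomp {O₁ O₂ O : ValuationSubring K}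
    (hmin : IsLeast {S : ValuationSubring K | O₁ ≤ S ∧ O₂ ≤ S} O)
    {w : K} (hw : w ∈ O) (hw0 : w ≠ 0) :
    ∃ a b : K, a ∈ O₁ ∧ b ∈ O₂ ∧ w = a * b := by
  classical
  set q : Set K := {y | ∀ b ∈ O₂, y * b ∈ O₁.nonunits} with hq
  -- q is stable under multiplication by the subring generated by O₁ ∪ O₂
  have hstable : ∀ w' ∈ Subring.closure ((O₁ : Set K) ∪ (O₂ : Set K)),
      ∀ y ∈ q, w' * y ∈ q := by
    intro w' hw'
    induction hw' using Subring.closure_induction with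
    | mem x hx =>
      intro y hy b hb
      rcases hx with hx | hx
      · have : x * (y * b) ∈ O₁.nonunits := nu_mul (hy b hb) hx
        rwa [← mul_assoc] at this
      · have : (x * y) * b = y * (x * b) := by ring
        rw [this]
        exact hy _ (mul_mem hx hb)
    | zero => intro y hy b hb; rw [zero_mul, zero_mul]; exact nu_zero O₁
    | one => intro y hy b hb; rw [one_mul]; exact hy b hb
    | add x z hx hz ihx ihz =>
      intro y hy b hb
      have : (x + z) * y * b = x * y * b + z * y * b := by ring
      rw [this]
      exact nu_add (ihx y hy b hb) (ihz y hy b hb)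
    | neg x hx ih =>
      intro y hy b hb
      have : (-x) * y * b = -(x * y * b) := by ring
      rw [this]
      exact nu_neg (ih y hy b hb)
    | mul x z hx hz ihx ihz =>
      intro y hy
      have : x * z * y = x * (z * y) := by ring
      rw [this]
      exact ihx _ (ihz y hy)
  have hOle : O ≤ joinV O₁ O₂ := hmin.2 ⟨fun x hx => Subring.subset_closure (Or.inl hx),
    fun x hx => Subring.subset_closure (Or.inr hx)⟩
  -- w⁻¹ is not in q
  have hwq : w⁻¹ ∉ q := by
    intro h
    have h1 : (1 : K) ∈ q := by
      have := hstable w (hOle hw) w⁻¹ h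
      rwa [mul_inv_cancel₀ hw0] at this
    have := h1 1 (one_mem O₂)
    rw [one_mul] at this
    exact absurd ((ValuationSubring.mem_nonunits_iff O₁).1 this) (lt_irrefl 1)
  rw [hq] at hwq
  simp only [Set.mem_setOf_eq] at hwq
  push_neg at hwq
  obtain ⟨b, hb, hnb⟩ := hwq
  have hb0 : b ≠ 0 := by
    rintro rfl
    exact hnb (by rw [mul_zero]; exact nu_zero O₁)
  refine ⟨w * b⁻¹, b, ?_, hb, by field_simp⟩
  rcases O₁.mem_or_inv_mem (w⁻¹ * b) with h | h
  · -- w⁻¹ * b ∈ O₁ but not a nonunit, so its valuation is 1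
    have hle : O₁.valuation (w⁻¹ * b) ≤ 1 := (O₁.valuation_le_one_iff _).2 h
    have hlt : ¬ O₁.valuation (w⁻¹ * b) < 1 := fun hc =>
      hnb ((ValuationSubring.mem_nonunits_iff O₁).2 hc)
    have heq : O₁.valuation (w⁻¹ * b) = 1 := le_antisymm hle (not_lt.1 hlt)
    apply O₁.mem_of_valuation_le_one
    have : w * b⁻¹ = (w⁻¹ * b)⁻¹ := by field_simp
    rw [this, Valuation.map_inv, heq, inv_one]
  · have : w * b⁻¹ = (w⁻¹ * b)⁻¹ := by field_simp
    rwa [this]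

/-- For `x ∈ O`, find `z ∈ A` (with `A ≤ O`) such that `z⁻¹ ∈ O` and `x * z ∈ A`. -/
lemma z_exists {A O : ValuationSubring K} (_hAO : A ≤ O) {x : K} (hx : x ∈ O) :
    ∃ z : K, z ≠ 0 ∧ z ∈ A ∧ z⁻¹ ∈ O ∧ x * z ∈ A := by
  by_cases h : x ∈ A
  · exact ⟨1, one_ne_zero, one_mem _, by rw [inv_one]; exact one_mem _, by rwa [mul_one]⟩
  · have hx0 : x ≠ 0 := fun h0 => h (h0 ▸ zero_mem A.toSubring)
    have hxi : x⁻¹ ∈ A := (A.mem_or_inv_mem x).resolve_left h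
    exact ⟨x⁻¹, inv_ne_zero hx0, hxi, by rw [inv_inv]; exact hx,
      by rw [mul_inv_cancel₀ hx0]; exact one_mem _⟩

/-- The key approximation lemma: there is `d` with `d` and `d·x₁` in `m₁` while
`d⁻¹`, `d⁻¹·y₁`, `d⁻¹·y₂` are in `m₂`. -/
lemma key_approx {O₁ O₂ O : ValuationSubring K}
    (hmin : IsLeast {S : ValuationSubring K | O₁ ≤ S ∧ O₂ ≤ S} O)
    (hlt₁ : O₁ < O) (hlt₂ : O₂ < O)
    {x₁ y₁ y₂ : K} (hx₁ : x₁ ∈ O) (hy₁ : y₁ ∈ O) (hy₂ : y₂ ∈ O) :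
    ∃ d : K, d ≠ 0 ∧ d ∈ O₁.nonunits ∧ d * x₁ ∈ O₁.nonunits ∧
      d⁻¹ ∈ O₂.nonunits ∧ d⁻¹ * y₁ ∈ O₂.nonunits ∧ d⁻¹ * y₂ ∈ O₂.nonunits := by
  have hle₁ : O₁ ≤ O := hlt₁.le
  have hle₂ : O₂ ≤ O := hlt₂.le
  -- pick a nonunit of O₁ whose inverse is in O
  obtain ⟨g, hgO, hgO₁⟩ := SetLike.exists_of_lt hlt₁
  have hg0 : g ≠ 0 := fun h0 => hgO₁ (h0 ▸ zero_mem O₁.toSubring)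
  set e : K := g⁻¹ with he
  have he0 : e ≠ 0 := inv_ne_zero hg0
  have heNU : e ∈ O₁.nonunits := nu_of_not_mem hgO₁
  have heiO : e⁻¹ ∈ O := by rw [he, inv_inv]; exact hgO
  obtain ⟨g', hg'O, hg'O₂⟩ := SetLike.exists_of_lt hlt₂
  have hg'0 : g' ≠ 0 := fun h0 => hg'O₂ (h0 ▸ zero_mem O₂.toSubring)
  set e' : K := g'⁻¹ with he'
  have he'0 : e' ≠ 0 := inv_ne_zero hg'0
  have he'NU : e' ∈ O₂.nonunits := nu_of_not_mem hg'O₂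
  have he'iO : e'⁻¹ ∈ O := by rw [he', inv_inv]; exact hg'O
  -- correction factors
  obtain ⟨z₁, hz₁0, hz₁A, hz₁iO, hxz₁⟩ := z_exists hle₁ hx₁
  obtain ⟨z₂, hz₂0, hz₂A, hz₂iO, hyz₂⟩ := z_exists hle₂ hy₁
  obtain ⟨z₃, hz₃0, hz₃A, hz₃iO, hyz₃⟩ := z_exists hle₂ hy₂
  set c : K := e * e * z₁ with hc
  set c' : K := e' * e' * (z₂ * z₃) with hc'
  have hc0 : c ≠ 0 := by
    simp [hc, he0, hz₁0]
  have hc'0 : c' ≠ 0 := by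
    simp [hc', he'0, hz₂0, hz₃0]
  have hcNU : c ∈ O₁.nonunits := by
    have : c = (e * z₁) * e := by ring
    rw [this]
    exact nu_mul heNU (mul_mem (nu_mem heNU) hz₁A)
  have hcxNU : c * x₁ ∈ O₁.nonunits := by
    have : c * x₁ = (e * (x₁ * z₁)) * e := by rw [hc]; ring
    rw [this]
    exact nu_mul heNU (mul_mem (nu_mem heNU) hxz₁)
  have hc'NU : c' ∈ O₂.nonunits := by
    have : c' = (e' * (z₂ * z₃)) * e' := by rw [hc']; ring
    rw [this]
    exact nu_mul he'NU (mul_mem (nu_mem he'NU) (mul_mem hz₂A hz₃A))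
  have hc'yNU : c' * y₁ ∈ O₂.nonunits := by
    have : c' * y₁ = (e' * ((y₁ * z₂) * z₃)) * e' := by rw [hc']; ring
    rw [this]
    exact nu_mul he'NU (mul_mem (nu_mem he'NU) (mul_mem hyz₂ hz₃A))
  have hc'y₂NU : c' * y₂ ∈ O₂.nonunits := by
    have : c' * y₂ = (e' * (z₂ * (y₂ * z₃))) * e' := by rw [hc']; ring
    rw [this]
    exact nu_mul he'NU (mul_mem (nu_mem he'NU) (mul_mem hz₂A hyz₃))
  have hciO : c⁻¹ ∈ O := by
    rw [hc, mul_inv, mul_inv]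
    exact mul_mem (mul_mem heiO heiO) hz₁iO
  have hc'iO : c'⁻¹ ∈ O := by
    rw [hc', mul_inv, mul_inv, mul_inv]
    exact mul_mem (mul_mem he'iO he'iO) (mul_mem hz₂iO hz₃iO)
  -- factor (c * c')⁻¹ = a * b with a ∈ O₁, b ∈ O₂
  obtain ⟨a, b, haO₁, hbO₂, hab⟩ := prod_decomp hmin
    (show (c * c')⁻¹ ∈ O by rw [mul_inv]; exact mul_mem hciO hc'iO)
    (inv_ne_zero (mul_ne_zero hc0 hc'0))
  have ha0 : a ≠ 0 := by
    intro h0; rw [h0, zero_mul] at hab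
    exact inv_ne_zero (mul_ne_zero hc0 hc'0) hab
  have hb0 : b ≠ 0 := by
    intro h0; rw [h0, mul_zero] at hab
    exact inv_ne_zero (mul_ne_zero hc0 hc'0) hab
  have hdinv : (c * a)⁻¹ = c' * b := by
    apply inv_eq_of_mul_eq_one_right
    have : c * a * (c' * b) = (c * c') * (a * b) := by ring
    rw [this, ← hab, mul_inv_cancel₀ (mul_ne_zero hc0 hc'0)]
  refine ⟨c * a, mul_ne_zero hc0 ha0, ?_, ?_, ?_, ?_, ?_⟩
  · rw [mul_comm]; exact nu_mul hcNU haO₁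
  · have : c * a * x₁ = a * (c * x₁) := by ring
    rw [this]; exact nu_mul hcxNU haO₁
  · rw [hdinv, mul_comm]; exact nu_mul hc'NU hbO₂
  · rw [hdinv]
    have : c' * b * y₁ = b * (c' * y₁) := by ring
    rw [this]; exact nu_mul hc'yNU hbO₂
  · rw [hdinv]
    have : c' * b * y₂ = b * (c' * y₂) := by ring
    rw [this]; exact nu_mul hc'y₂NU hbO₂

/-- Every element of `O` is a difference `(1+s) - (1+t)` with `s ∈ m₁`, `t ∈ m₂`. -/
lemma hard_sub {O₁ O₂ O : ValuationSubring K}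
    (hmin : IsLeast {S : ValuationSubring K | O₁ ≤ S ∧ O₂ ≤ S} O)
    (hlt₁ : O₁ < O) (hlt₂ : O₂ < O) {x : K} (hx : x ∈ O) :
    ∃ s t : K, s ∈ O₁.nonunits ∧ t ∈ O₂.nonunits ∧ (1 + s) - (1 + t) = x := by
  obtain ⟨d, hd0, hd1, hdx, hd2, hd2x, -⟩ :=
    key_approx hmin hlt₁ hlt₂ hx hx (zero_mem O.toSubring)
  refine ⟨(1 + d)⁻¹ * (d * x), -((1 + d⁻¹)⁻¹ * (d⁻¹ * x)),
    nu_mul hdx (nu_one_add_inv_mem hd1),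
    nu_neg (nu_mul hd2x (nu_one_add_inv_mem hd2)), ?_⟩
  have h1 : (1 : K) + d ≠ 0 := nu_ne_neg_one hd1
  have h2 : (1 : K) + d⁻¹ ≠ 0 := nu_ne_neg_one hd2
  have h4 : d + d ^ 2 ≠ 0 := by
    have hne := mul_ne_zero hd0 h1
    intro h; apply hne; linear_combination h
  have hinv : (d + d ^ 2) * (d + d ^ 2)⁻¹ = 1 := mul_inv_cancel₀ h4
  field_simp
  linear_combination x * mul_inv_cancel₀ h1

/-- Every element of `O^×` is a product `(1+s) * (1+t)` with `s ∈ m₁`, `t ∈ m₂`. -/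
lemma hard_mul {O₁ O₂ O : ValuationSubring K}
    (hmin : IsLeast {S : ValuationSubring K | O₁ ≤ S ∧ O₂ ≤ S} O)
    (hlt₁ : O₁ < O) (hlt₂ : O₂ < O) {x : K} (hx0 : x ≠ 0) (hx : x ∈ O) (hxi : x⁻¹ ∈ O) :
    ∃ s t : K, s ∈ O₁.nonunits ∧ t ∈ O₂.nonunits ∧ (1 + s) * (1 + t) = x := by
  obtain ⟨d, hd0, hd1, hdx, hd2, hd2y1, hd2y2⟩ :=
    key_approx hmin hlt₁ hlt₂ (sub_mem hx (one_mem O.toSubring)) hxi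
      (mul_mem (sub_mem hx (one_mem O.toSubring)) hxi)
  refine ⟨(1 + d)⁻¹ * (d * (x - 1)), (1 + d⁻¹ * x⁻¹)⁻¹ * (d⁻¹ * ((x - 1) * x⁻¹)),
    nu_mul hdx (nu_one_add_inv_mem hd1),
    nu_mul hd2y2 (nu_one_add_inv_mem hd2y1), ?_⟩
  have h1 : (1 : K) + d ≠ 0 := nu_ne_neg_one hd1
  have h3 : (1 : K) + d⁻¹ * x⁻¹ ≠ 0 := nu_ne_neg_one hd2y1
  have h3' : (x * d + 1 : K) ≠ 0 := by
    intro h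
    apply h3
    field_simp
    linear_combination h
  have h5 : d * x + d ^ 2 * x ^ 2 ≠ 0 := by
    have hne := mul_ne_zero (mul_ne_zero hd0 hx0) h3'
    intro h; apply hne; linear_combination h
  have hinv5 : (d * x + d ^ 2 * x ^ 2) * (d * x + d ^ 2 * x ^ 2)⁻¹ = 1 := mul_inv_cancel₀ h5
  have h6 : (1 + d * x : K) ≠ 0 := by rw [show (1 + d * x : K) = x * d + 1 by ring]; exact h3'
  field_simp
  linear_combination (x - 1) * mul_inv_cancel₀ h6

end Helpers

open scoped Pointwise

/-- The unit group of a valuation subring, as a subset of the field. -/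
def unitsSet {Λ : Type*} [Field Λ] (O : ValuationSubring Λ) : Set Λ :=
  {x : Λ | x ≠ 0 ∧ x ∈ O ∧ x⁻¹ ∈ O}

/-- Let `Λ` be a field with valuations `v₁, v₂`, and let `v = min(v₁,v₂)`
be their finest common coarsening (the least valuation subring containing both `O_{v₁}` and
`O_{v₂}`).  If `v < v₁` and `v < v₂` strictly, then
`(1+m_{v₁})·(1+m_{v₂}) = O_v^× = O_{v₁}^×·O_{v₂}^×` and
`(1+m_{v₁}) − (1+m_{v₂}) = O_v = O_{v₁} − O_{v₂}` (pointwise operations on subsets). -/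
theorem stmt_3 {Λ : Type*} [Field Λ] (O₁ O₂ O : ValuationSubring Λ)
    (hmin : IsLeast {S : ValuationSubring Λ | O₁ ≤ S ∧ O₂ ≤ S} O)
    (hlt₁ : O₁ < O) (hlt₂ : O₂ < O) :
    ((1 : Set Λ) + (O₁.nonunits : Set Λ)) * ((1 : Set Λ) + (O₂.nonunits : Set Λ))
        = unitsSet O ∧
    unitsSet O = unitsSet O₁ * unitsSet O₂ ∧
    ((1 : Set Λ) + (O₁.nonunits : Set Λ)) - ((1 : Set Λ) + (O₂.nonunits : Set Λ))
        = (O : Set Λ) ∧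
    (O : Set Λ) = (O₁ : Set Λ) - (O₂ : Set Λ) := by
  have hle₁ : O₁ ≤ O := hlt₁.le
  have hle₂ : O₂ ≤ O := hlt₂.le
  have memAdd : ∀ (A : ValuationSubring Λ) (x : Λ),
      x ∈ (1 : Set Λ) + (A.nonunits : Set Λ) ↔ ∃ s ∈ A.nonunits, x = 1 + s := by
    intro A x
    rw [Set.mem_add]
    constructor
    · rintro ⟨a, ha, s, hs, rfl⟩
      rw [Set.mem_one] at ha
      subst ha
      exact ⟨s, hs, rfl⟩
    · rintro ⟨s, hs, rfl⟩
      exact ⟨1, Set.mem_one.2 rfl, s, hs, rfl⟩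
  have hunit : ∀ (A : ValuationSubring Λ) {s : Λ}, s ∈ A.nonunits → (1 + s) ∈ unitsSet A :=
    fun A s hs => ⟨nu_ne_neg_one hs, nu_one_add_mem hs, nu_one_add_inv_mem hs⟩
  have hmono : ∀ {A B : ValuationSubring Λ}, A ≤ B → unitsSet A ⊆ unitsSet B :=
    fun h x hx => ⟨hx.1, h hx.2.1, h hx.2.2⟩
  have hmulU : ∀ {x y : Λ}, x ∈ unitsSet O → y ∈ unitsSet O → x * y ∈ unitsSet O := by
    rintro x y ⟨hx0, hx, hxi⟩ ⟨hy0, hy, hyi⟩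
    exact ⟨mul_ne_zero hx0 hy0, mul_mem hx hy, by rw [mul_inv]; exact mul_mem hxi hyi⟩
  have eq1 : ((1 : Set Λ) + (O₁.nonunits : Set Λ)) * ((1 : Set Λ) + (O₂.nonunits : Set Λ))
      = unitsSet O := by
    ext x
    rw [Set.mem_mul]
    constructor
    · rintro ⟨u, hu, v, hv, rfl⟩
      obtain ⟨s, hs, rfl⟩ := (memAdd O₁ u).1 hu
      obtain ⟨t, ht, rfl⟩ := (memAdd O₂ v).1 hv
      exact hmulU (hmono hle₁ (hunit O₁ hs)) (hmono hle₂ (hunit O₂ ht))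
    · rintro ⟨hx0, hx, hxi⟩
      obtain ⟨s, t, hs, ht, heq⟩ := hard_mul hmin hlt₁ hlt₂ hx0 hx hxi
      exact ⟨1 + s, (memAdd O₁ _).2 ⟨s, hs, rfl⟩, 1 + t, (memAdd O₂ _).2 ⟨t, ht, rfl⟩, heq⟩
  have eq2 : unitsSet O = unitsSet O₁ * unitsSet O₂ := by
    ext x
    rw [Set.mem_mul]
    constructor
    · rintro ⟨hx0, hx, hxi⟩
      obtain ⟨s, t, hs, ht, heq⟩ := hard_mul hmin hlt₁ hlt₂ hx0 hx hxi
      exact ⟨1 + s, hunit O₁ hs, 1 + t, hunit O₂ ht, heq⟩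
    · rintro ⟨u, hu, v, hv, rfl⟩
      exact hmulU (hmono hle₁ hu) (hmono hle₂ hv)
  have eq3 : ((1 : Set Λ) + (O₁.nonunits : Set Λ)) - ((1 : Set Λ) + (O₂.nonunits : Set Λ))
      = (O : Set Λ) := by
    ext x
    rw [Set.mem_sub]
    constructor
    · rintro ⟨u, hu, v, hv, rfl⟩
      obtain ⟨s, hs, rfl⟩ := (memAdd O₁ u).1 hu
      obtain ⟨t, ht, rfl⟩ := (memAdd O₂ v).1 hv
      exact sub_mem (hle₁ (nu_one_add_mem hs)) (hle₂ (nu_one_add_mem ht))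
    · intro hx
      obtain ⟨s, t, hs, ht, heq⟩ := hard_sub hmin hlt₁ hlt₂ hx
      exact ⟨1 + s, (memAdd O₁ _).2 ⟨s, hs, rfl⟩, 1 + t, (memAdd O₂ _).2 ⟨t, ht, rfl⟩, heq⟩
  have eq4 : (O : Set Λ) = (O₁ : Set Λ) - (O₂ : Set Λ) := by
    ext x
    rw [Set.mem_sub]
    constructor
    · intro hx
      obtain ⟨s, t, hs, ht, heq⟩ := hard_sub hmin hlt₁ hlt₂ hx
      exact ⟨1 + s, nu_one_add_mem hs, 1 + t, nu_one_add_mem ht, heq⟩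
    · rintro ⟨u, hu, v, hv, rfl⟩
      exact sub_mem (hle₁ hu) (hle₂ hv)
  exact ⟨eq1, eq2, eq3, eq4⟩
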